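/- Let A be a graded vector space with degree ±1 operators d, d*, d^Λ, d^{Λ*} satisfying d^2 = (d*)^2 = (d^Λ)^2 = (d^{Λ*})^2 = 0, the anticommutation relations [d, d^{Λ*}] = 0, [d, d^Λ] = 0, [d*, d^Λ] = 0, [d*, d^{Λ*}] = 0, and Δ_d = Δ_{d^Λ} where Δ_d = dd* + d*d and Δ_{d^Λ} = d^Λ d^{Λ*} + d^{Λ*}d^Λ. Then the Bott–Chern Laplacian Δ^{BC}_{d^Λ} := d*d + d^{Λ*}d^Λ + d d^Λ d^{Λ*} d* + d^{Λ*}dd*d^Λ + d*d^Λ d^{Λ*}d + d^{Λ*}d*dd^Λ satisfies Δ^{BC}_{d^Λ} = Δ_{d^Λ}Δ_{d^Λ} + d*d + d^{Λ*}d^Λ. -/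
import Mathlib


/-- Let `A` be a graded vector space with degree `±1` operators `d, d*, dΛ, dΛ*`
squaring to zero, pairwise anticommutation relations `[d,dΛ*] = [d,dΛ] = [d*,dΛ] =
[d*,dΛ*] = 0` (graded commutators of odd operators, i.e. anticommutators), and
`Δ_d = Δ_{dΛ}`. Then the Bott–Chern Laplacian
`Δ^{BC}_{dΛ} = d*d + dΛ*dΛ + d dΛ dΛ* d* + dΛ* d d* dΛ + d* dΛ dΛ* d + dΛ* d* d dΛ`
satisfies `Δ^{BC}_{dΛ} = Δ_{dΛ} Δ_{dΛ} + d*d + dΛ*dΛ`. -/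
theorem bott_chern_laplacian_identity
    {V : Type*} [AddCommGroup V] [Module ℂ V]
    (d dstar dLam dLamstar : Module.End ℂ V)
    (hd2 : d * d = 0) (hds2 : dstar * dstar = 0)
    (hdL2 : dLam * dLam = 0) (hdLs2 : dLamstar * dLamstar = 0)
    (h1 : d * dLamstar + dLamstar * d = 0)
    (h2 : d * dLam + dLam * d = 0)
    (h3 : dstar * dLam + dLam * dstar = 0)
    (h4 : dstar * dLamstar + dLamstar * dstar = 0)
    (hDelta : d * dstar + dstar * d = dLam * dLamstar + dLamstar * dLam) :
    dstar * d + dLamstar * dLam +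
      d * dLam * dLamstar * dstar + dLamstar * d * dstar * dLam +
      dstar * dLam * dLamstar * d + dLamstar * dstar * d * dLam =
    (dLam * dLamstar + dLamstar * dLam) * (dLam * dLamstar + dLamstar * dLam) +
      dstar * d + dLamstar * dLam := by
  have hA : d * dLam = -(dLam * d) := by rw [eq_neg_iff_add_eq_zero]; exact h2
  have hB : dLamstar * dstar = -(dstar * dLamstar) := by
    rw [eq_neg_iff_add_eq_zero, add_comm]; exact h4
  have hC : dstar * dLam = -(dLam * dstar) := by rw [eq_neg_iff_add_eq_zero]; exact h3
  have hD : dLamstar * d = -(d * dLamstar) := by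
    rw [eq_neg_iff_add_eq_zero, add_comm]; exact h1
  have e1 : d * dLam * dLamstar * dstar = dLam * (d * dstar) * dLamstar := by
    calc d * dLam * dLamstar * dstar = (d * dLam) * (dLamstar * dstar) := by noncomm_ring
    _ = (-(dLam * d)) * (-(dstar * dLamstar)) := by rw [hA, hB]
    _ = dLam * (d * dstar) * dLamstar := by noncomm_ring
  have e2 : dstar * dLam * dLamstar * d = dLam * (dstar * d) * dLamstar := by
    calc dstar * dLam * dLamstar * d = (dstar * dLam) * (dLamstar * d) := by noncomm_ring
    _ = (-(dLam * dstar)) * (-(d * dLamstar)) := by rw [hC, hD]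
    _ = dLam * (dstar * d) * dLamstar := by noncomm_ring
  have s1 : d * dLam * dLamstar * dstar + dstar * dLam * dLamstar * d
      = dLam * dLamstar * (dLam * dLamstar) := by
    calc d * dLam * dLamstar * dstar + dstar * dLam * dLamstar * d
        = dLam * (d * dstar + dstar * d) * dLamstar := by rw [e1, e2]; noncomm_ring
    _ = dLam * (dLam * dLamstar + dLamstar * dLam) * dLamstar := by rw [hDelta]
    _ = dLam * dLam * dLamstar * dLamstar + dLam * dLamstar * (dLam * dLamstar) := by
        noncomm_ring
    _ = dLam * dLamstar * (dLam * dLamstar) := by rw [hdL2]; noncomm_ring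
  have s2 : dLamstar * d * dstar * dLam + dLamstar * dstar * d * dLam
      = dLamstar * dLam * (dLamstar * dLam) := by
    calc dLamstar * d * dstar * dLam + dLamstar * dstar * d * dLam
        = dLamstar * (d * dstar + dstar * d) * dLam := by noncomm_ring
    _ = dLamstar * (dLam * dLamstar + dLamstar * dLam) * dLam := by rw [hDelta]
    _ = dLamstar * dLam * (dLamstar * dLam) + dLamstar * dLamstar * (dLam * dLam) := by
        noncomm_ring
    _ = dLamstar * dLam * (dLamstar * dLam) := by rw [hdLs2]; noncomm_ring
  have rhs : (dLam * dLamstar + dLamstar * dLam) * (dLam * dLamstar + dLamstar * dLam)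
      = dLam * dLamstar * (dLam * dLamstar) + dLamstar * dLam * (dLamstar * dLam) := by
    have : (dLam * dLamstar + dLamstar * dLam) * (dLam * dLamstar + dLamstar * dLam)
        = dLam * dLamstar * (dLam * dLamstar) + dLam * (dLamstar * dLamstar) * dLam
          + dLamstar * (dLam * dLam) * dLamstar + dLamstar * dLam * (dLamstar * dLam) := by
      noncomm_ring
    rw [this, hdL2, hdLs2]; noncomm_ring
  rw [rhs]
  calc dstar * d + dLamstar * dLam +
      d * dLam * dLamstar * dstar + dLamstar * d * dstar * dLam +
      dstar * dLam * dLamstar * d + dLamstar * dstar * d * dLam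
      = (d * dLam * dLamstar * dstar + dstar * dLam * dLamstar * d)
        + (dLamstar * d * dstar * dLam + dLamstar * dstar * d * dLam)
        + (dstar * d + dLamstar * dLam) := by noncomm_ring
  _ = dLam * dLamstar * (dLam * dLamstar) + dLamstar * dLam * (dLamstar * dLam) +
      dstar * d + dLamstar * dLam := by rw [s1, s2]; noncomm_ring
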